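/- The class of rooted CQs is not rewritable to arithmetic unions of CQs for DL-Lite_core^bag: there exist a rooted CQ q(x) and a DL-Lite_core TBox T such that for every arithmetic union of CQs q'(x) = q₁(x) ⩒ … ⩒ q_n(x) there is a bag ABox A with ⟨T,A⟩ satisfiable and q^{⟨T,A⟩} ≠ q'^{C(⟨∅,A⟩)}. -/

import Mathlib

/-!
Common formalization of the bag semantics of DL-Lite ontologies
(Nikolaou et al., "The Bag Semantics of Ontology-Based Data Access").
-/

open scoped Classical

noncomputable section

/-- Individuals (constants). -/
abbrev Ind : Type := ℕ
/-- Variables. -/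
abbrev Var : Type := ℕ
/-- Atomic concepts (unary predicates). -/
abbrev AtomicConcept : Type := ℕ
/-- Atomic roles (binary predicates). -/
abbrev AtomicRole : Type := ℕ

/-- A role is an atomic role or its inverse. -/
inductive Role where
  | atomic : AtomicRole → Role
  | inv : AtomicRole → Role
  deriving DecidableEq

/-- A concept is an atomic concept or `∃R` for a role `R`. -/
inductive DLConcept where
  | atomic : AtomicConcept → DLConcept
  | ex : Role → DLConcept
  deriving DecidableEq

/-- TBox axioms: inclusions and disjointness axioms between concepts or roles. -/
inductive TBoxAxiom where
  | cIncl : DLConcept → DLConcept → TBoxAxiom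
  | rIncl : Role → Role → TBoxAxiom
  | cDisj : DLConcept → DLConcept → TBoxAxiom
  | rDisj : Role → Role → TBoxAxiom
  deriving DecidableEq

/-- A DL-Lite_R TBox: a finite set of TBox axioms. -/
abbrev TBox : Type := Finset TBoxAxiom

/-- A DL-Lite_core TBox: only concept inclusions and concept disjointness axioms. -/
def TBox.IsCore (T : TBox) : Prop :=
  ∀ ax ∈ T, (∃ C D, ax = TBoxAxiom.cIncl C D) ∨ (∃ C D, ax = TBoxAxiom.cDisj C D)

/-- ABox assertions. -/
inductive Assertion where
  | conceptA : AtomicConcept → Ind → Assertion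
  | roleA : AtomicRole → Ind → Ind → Assertion
  deriving DecidableEq

/-- A bag ABox: a finite bag of assertions (represented as a multiset). -/
abbrev BagABox : Type := Multiset Assertion

/-- Multiplicity of an assertion in a bag ABox, as an extended natural. -/
def BagABox.mult (A : BagABox) (s : Assertion) : ℕ∞ := (A.count s : ℕ∞)

/-- Sum of an arbitrary family of extended naturals. -/
def bagSum {α : Type*} (f : α → ℕ∞) : ℕ∞ := ⨆ s : Finset α, ∑ x ∈ s, f x

/-- A bag interpretation. -/
structure BagInterp : Type 1 where
  Δ : Type
  dne : Nonempty Δ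
  indMap : Ind → Δ
  indInj : Function.Injective indMap
  cI : AtomicConcept → Δ → ℕ∞
  rI : AtomicRole → Δ → Δ → ℕ∞

/-- Extension of the interpretation function to roles. -/
def BagInterp.roleMult (I : BagInterp) : Role → I.Δ → I.Δ → ℕ∞
  | Role.atomic P => fun u v => I.rI P u v
  | Role.inv P => fun u v => I.rI P v u

/-- Extension of the interpretation function to concepts. -/
def BagInterp.conceptMult (I : BagInterp) : DLConcept → I.Δ → ℕ∞
  | DLConcept.atomic A => fun u => I.cI A u
  | DLConcept.ex R => fun u => bagSum (fun v => I.roleMult R u v)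

/-- Multiplicity of an assertion in a bag interpretation. -/
def BagInterp.assertMult (I : BagInterp) : Assertion → ℕ∞
  | Assertion.conceptA A a => I.cI A (I.indMap a)
  | Assertion.roleA P a b => I.rI P (I.indMap a) (I.indMap b)

/-- Satisfaction of a TBox axiom by a bag interpretation. -/
def BagInterp.SatisfiesAx (I : BagInterp) : TBoxAxiom → Prop
  | TBoxAxiom.cIncl C D => ∀ u, I.conceptMult C u ≤ I.conceptMult D u
  | TBoxAxiom.rIncl R S => ∀ u v, I.roleMult R u v ≤ I.roleMult S u v
  | TBoxAxiom.cDisj C D => ∀ u, min (I.conceptMult C u) (I.conceptMult D u) = 0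
  | TBoxAxiom.rDisj R S => ∀ u v, min (I.roleMult R u v) (I.roleMult S u v) = 0

/-- A DL-Lite^bag ontology. -/
structure Ontology : Type where
  tbox : TBox
  abox : BagABox

/-- `I` is a bag model of the ontology `K`. -/
def BagInterp.IsModel (I : BagInterp) (K : Ontology) : Prop :=
  (∀ ax ∈ K.tbox, I.SatisfiesAx ax) ∧
  ∀ s : Assertion, BagABox.mult K.abox s ≤ I.assertMult s

/-- Satisfiability of an ontology under bag semantics. -/
def Ontology.Satisfiable (K : Ontology) : Prop := ∃ I : BagInterp, I.IsModel K

/- ## Conjunctive queries -/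

/-- Terms: variables or individuals. -/
inductive Term where
  | var : Var → Term
  | ind : Ind → Term
  deriving DecidableEq

def Term.varsOf : Term → List Var
  | Term.var v => [v]
  | Term.ind _ => []

def Term.indsOf : Term → List Ind
  | Term.var _ => []
  | Term.ind a => [a]

/-- Query atoms: concept atoms, role atoms, and equalities. -/
inductive QAtom where
  | conceptAt : AtomicConcept → Term → QAtom
  | roleAt : AtomicRole → Term → Term → QAtom
  | eqAt : Var → Term → QAtom
  deriving DecidableEq

def QAtom.terms : QAtom → List Term
  | QAtom.conceptAt _ t => [t]
  | QAtom.roleAt _ t₁ t₂ => [t₁, t₂]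
  | QAtom.eqAt z t => [Term.var z, t]

def QAtom.vars : QAtom → List Var
  | QAtom.conceptAt _ t => t.varsOf
  | QAtom.roleAt _ t₁ t₂ => t₁.varsOf ++ t₂.varsOf
  | QAtom.eqAt z t => z :: t.varsOf

/-- A conjunctive query `q(x) = ∃y. φ(x,y)`: a tuple of answer variables,
a tuple of existential variables, and a conjunction (list, i.e. allowing
repetitions) of atoms. -/
structure CQ : Type where
  answerVars : List Var
  existVars : List Var
  atoms : List QAtom

def CQ.vars (q : CQ) : List Var := q.answerVars ++ q.existVars

/-- Value of a term under a valuation of the variables. -/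
def termVal (I : BagInterp) (f : Var → I.Δ) : Term → I.Δ
  | Term.var v => f v
  | Term.ind a => I.indMap a

/-- Multiplicity contributed by an atom under a valuation: for predicate atoms the
multiplicity of the image tuple, for equalities the indicator of satisfaction. -/
def QAtom.mult (I : BagInterp) (f : Var → I.Δ) : QAtom → ℕ∞
  | QAtom.conceptAt A t => I.cI A (termVal I f t)
  | QAtom.roleAt P t₁ t₂ => I.rI P (termVal I f t₁) (termVal I f t₂)
  | QAtom.eqAt z t => if f z = termVal I f t then 1 else 0

/-- The bag answers `q^I(ā)`: the sum, over all valuations of the variables of `q`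
mapping the answer variables to `ā` (valuations are normalized to a fixed junk
value outside the variables of `q`), of the product of the multiplicities of the
atom occurrences of `q`. -/
def CQ.bagAnswer (q : CQ) (I : BagInterp) (a : List Ind) : ℕ∞ :=
  bagSum (fun f : {f : Var → I.Δ //
      (∀ v, v ∉ q.vars → f v = I.indMap 0) ∧
      q.answerVars.map f = a.map I.indMap} =>
    (q.atoms.map (QAtom.mult I f.1)).prod)

/-- Bag certain answers: pointwise minimum over all bag models. -/
def bagCertain (K : Ontology) (q : CQ) (a : List Ind) : ℕ∞ :=
  ⨅ (I : BagInterp) (_ : I.IsModel K), q.bagAnswer I a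

/-- Base relation of the equivalence relation generated by the equality atoms. -/
def CQ.eqBase (q : CQ) : Term → Term → Prop := fun t₁ t₂ =>
  ∃ z t, QAtom.eqAt z t ∈ q.atoms ∧ t₁ = Term.var z ∧ t₂ = t

/-- Equivalence of terms generated by the equality atoms of `q`. -/
def CQ.eqRel (q : CQ) : Term → Term → Prop := Relation.EqvGen q.eqBase

/-- Safety: the class of every variable contains a term occurring in a
non-equality atom. -/
def CQ.Safe (q : CQ) : Prop :=
  ∀ v ∈ q.vars, ∃ t : Term, ∃ atm ∈ q.atoms,
    (∀ z s, atm ≠ QAtom.eqAt z s) ∧ t ∈ QAtom.terms atm ∧ q.eqRel (Term.var v) t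

/-- Well-formedness of CQs: repetition-free disjoint tuples of variables, all
variables of the atoms among the declared variables, and safety. -/
def CQ.WellFormed (q : CQ) : Prop :=
  q.answerVars.Nodup ∧ q.existVars.Nodup ∧
  (∀ v ∈ q.answerVars, v ∉ q.existVars) ∧
  (∀ atm ∈ q.atoms, ∀ v ∈ QAtom.vars atm, v ∈ q.vars) ∧
  q.Safe

def CQ.mentionsTerm (q : CQ) (t : Term) : Prop := ∃ atm ∈ q.atoms, t ∈ QAtom.terms atm

/-- Adjacency in the Gaifman graph of `q` (on terms; equality atoms merge the
classes of their two terms, which for connectivity purposes is the same as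
making them adjacent). -/
def CQ.gaifmanAdj (q : CQ) : Term → Term → Prop := fun t₁ t₂ =>
  ∃ atm ∈ q.atoms, t₁ ∈ QAtom.terms atm ∧ t₂ ∈ QAtom.terms atm

/-- A CQ is rooted if every connected component of its Gaifman graph contains
an answer variable or an individual. -/
def CQ.Rooted (q : CQ) : Prop :=
  ∀ t : Term, q.mentionsTerm t →
    ∃ t' : Term, Relation.ReflTransGen q.gaifmanAdj t t' ∧
      ((∃ v ∈ q.answerVars, t' = Term.var v) ∨ ∃ a : Ind, t' = Term.ind a)

/- ## Set semantics -/

/-- A classical (set) interpretation. -/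
structure SetInterp : Type 1 where
  Δ : Type
  dne : Nonempty Δ
  indMap : Ind → Δ
  indInj : Function.Injective indMap
  cI : AtomicConcept → Set Δ
  rI : AtomicRole → Set (Δ × Δ)

def SetInterp.roleSet (I : SetInterp) : Role → Set (I.Δ × I.Δ)
  | Role.atomic P => I.rI P
  | Role.inv P => {p | (p.2, p.1) ∈ I.rI P}

def SetInterp.conceptSet (I : SetInterp) : DLConcept → Set I.Δ
  | DLConcept.atomic A => I.cI A
  | DLConcept.ex R => {u | ∃ v, (u, v) ∈ I.roleSet R}

def SetInterp.SatisfiesAx (I : SetInterp) : TBoxAxiom → Prop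
  | TBoxAxiom.cIncl C D => I.conceptSet C ⊆ I.conceptSet D
  | TBoxAxiom.rIncl R S => I.roleSet R ⊆ I.roleSet S
  | TBoxAxiom.cDisj C D => I.conceptSet C ∩ I.conceptSet D = ∅
  | TBoxAxiom.rDisj R S => I.roleSet R ∩ I.roleSet S = ∅

def SetInterp.SatisfiesAssertion (I : SetInterp) : Assertion → Prop
  | Assertion.conceptA A a => I.indMap a ∈ I.cI A
  | Assertion.roleA P a b => (I.indMap a, I.indMap b) ∈ I.rI P

/-- `I` is a (set) model of the TBox `T` and the set ABox `A`. -/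
def SetInterp.IsModelOf (I : SetInterp) (T : TBox) (A : Finset Assertion) : Prop :=
  (∀ ax ∈ T, I.SatisfiesAx ax) ∧ ∀ s ∈ A, I.SatisfiesAssertion s

def setTermVal (I : SetInterp) (f : Var → I.Δ) : Term → I.Δ
  | Term.var v => f v
  | Term.ind a => I.indMap a

def SetInterp.SatAtom (I : SetInterp) (f : Var → I.Δ) : QAtom → Prop
  | QAtom.conceptAt A t => setTermVal I f t ∈ I.cI A
  | QAtom.roleAt P t₁ t₂ => (setTermVal I f t₁, setTermVal I f t₂) ∈ I.rI P
  | QAtom.eqAt z t => f z = setTermVal I f t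

/-- `q(ā)` holds in the set interpretation `I`. -/
def SetInterp.SatCQ (I : SetInterp) (q : CQ) (a : List Ind) : Prop :=
  ∃ f : Var → I.Δ, q.answerVars.map f = a.map I.indMap ∧ ∀ atm ∈ q.atoms, I.SatAtom f atm

/-- Entailment of a concept inclusion from a TBox (standard set semantics). -/
def TBox.EntailsCI (T : TBox) (C D : DLConcept) : Prop :=
  ∀ I : SetInterp, (∀ ax ∈ T, I.SatisfiesAx ax) → I.conceptSet C ⊆ I.conceptSet D

/- ## The canonical bag model -/

/-- Domain elements of the canonical model: individuals and anonymous elements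
`w^j_{u,R}`. -/
inductive CanElem where
  | ind : Ind → CanElem
  | anon : CanElem → Role → ℕ → CanElem
  deriving DecidableEq

def CanElem.isAnon : CanElem → Prop
  | CanElem.ind _ => False
  | CanElem.anon _ _ _ => True

/-- A stage of the canonical-model construction: a set of active elements and
bag interpretations of the predicates. -/
structure PreInterp : Type where
  active : Set CanElem
  c : AtomicConcept → CanElem → ℕ∞
  r : AtomicRole → CanElem → CanElem → ℕ∞

def PreInterp.toInterp (P : PreInterp) : BagInterp where
  Δ := CanElem
  dne := ⟨CanElem.ind 0⟩
  indMap := CanElem.ind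
  indInj := fun a b h => by cases h; rfl
  cI := P.c
  rI := P.r

/-- Concept closure: `ccl(u,I,T)(C)` is the supremum of `C₀^I(u)` over all
concepts `C₀` with `T ⊨ C₀ ⊑ C`. -/
def cclI (T : TBox) (I : BagInterp) (C : DLConcept) (u : I.Δ) : ℕ∞ :=
  ⨆ C₀ : {C₀ : DLConcept // TBox.EntailsCI T C₀ C}, I.conceptMult C₀.1 u

def PreInterp.ccl (P : PreInterp) (T : TBox) (u : CanElem) (C : DLConcept) : ℕ∞ :=
  cclI T P.toInterp C u

/-- `δ = ccl(u,C_{i-1},T)(∃R) − (∃R)^{C_{i-1}}(u)` (truncated subtraction). -/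
def PreInterp.delta (P : PreInterp) (T : TBox) (u : CanElem) (R : Role) : ℕ∞ :=
  P.ccl T u (DLConcept.ex R) - P.toInterp.conceptMult (DLConcept.ex R) u

/-- The anonymous elements freshly added when stepping from `P`. -/
def PreInterp.NewAnon (P : PreInterp) (T : TBox) (w : CanElem) : Prop :=
  ∃ u R j, w = CanElem.anon u R j ∧ u ∈ P.active ∧ (j : ℕ∞) < P.delta T u R

/-- One step of the canonical-model construction. -/
def PreInterp.step (P : PreInterp) (T : TBox) : PreInterp where
  active := P.active ∪ {w | P.NewAnon T w}
  c := fun A u => if u ∈ P.active then P.ccl T u (DLConcept.atomic A) else 0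
  r := fun P₀ u v =>
    if u ∈ P.active ∧ v ∈ P.active then P.r P₀ u v
    else if ∃ j, v = CanElem.anon u (Role.atomic P₀) j ∧ P.NewAnon T v then 1
    else if ∃ j, u = CanElem.anon v (Role.inv P₀) j ∧ P.NewAnon T u then 1
    else 0

/-- The stages `C_i(K)` of the canonical bag model. -/
def canStage (K : Ontology) : ℕ → PreInterp
  | 0 =>
    { active := Set.range CanElem.ind
      c := fun A u =>
        match u with
        | CanElem.ind a => BagABox.mult K.abox (Assertion.conceptA A a)
        | _ => 0
      r := fun P u v =>
        match u, v with
        | CanElem.ind a, CanElem.ind b => BagABox.mult K.abox (Assertion.roleA P a b)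
        | _, _ => 0 }
  | (i + 1) => (canStage K i).step K.tbox

/-- The canonical bag model `C(K) = ⋃_{i ≥ 0} C_i(K)` (pointwise maximum). -/
def canInterp (K : Ontology) : BagInterp where
  Δ := CanElem
  dne := ⟨CanElem.ind 0⟩
  indMap := CanElem.ind
  indInj := fun a b h => by cases h; rfl
  cI := fun A u => ⨆ i, (canStage K i).c A u
  rI := fun P u v => ⨆ i, (canStage K i).r P u v

/-- The canonical bag model `C(⟨∅,A⟩)` of the ontology with empty TBox:
individuals as domain, every predicate interpreted by its ABox bag. -/
def emptyCanInterp (A : BagABox) : BagInterp where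
  Δ := Ind
  dne := ⟨0⟩
  indMap := id
  indInj := fun _ _ h => h
  cI := fun C a => BagABox.mult A (Assertion.conceptA C a)
  rI := fun P a b => BagABox.mult A (Assertion.roleA P a b)

/-- `[q,z]^{C(K)}`: bag answers over the canonical model computed only over
valuations sending the variables of `z` to anonymous elements and the remaining
existential variables to individuals. -/
def CQ.restrictedAnswer (q : CQ) (K : Ontology) (z : Finset Var) (a : List Ind) : ℕ∞ :=
  bagSum (fun f : {f : Var → CanElem //
      (∀ v, v ∉ q.vars → f v = CanElem.ind 0) ∧
      q.answerVars.map f = a.map CanElem.ind ∧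
      ∀ v ∈ q.existVars, (v ∈ z → CanElem.isAnon (f v)) ∧ (v ∉ z → ∃ b : Ind, f v = CanElem.ind b)} =>
    (q.atoms.map (QAtom.mult (canInterp K) f.1)).prod)

/- ## Ma-connected subsets, realisability, and the per-`z` rewritten query -/

/-- `t` is a variable belonging to `z`. -/
def Term.IsZVar (t : Term) (z : Finset Var) : Prop := ∃ v ∈ z, t = Term.var v

/-- Adjacency in the Gaifman graph restricted to nodes that are variables of `z`. -/
def CQ.zAdj (q : CQ) (z : Finset Var) : Term → Term → Prop := fun t₁ t₂ =>
  q.gaifmanAdj t₁ t₂ ∧ t₁.IsZVar z ∧ t₂.IsZVar z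

/-- `z'` is maximally connected in the anonymous part (ma-connected) within `z`. -/
def CQ.MAConnected (q : CQ) (z z' : Finset Var) : Prop :=
  z' ⊆ z ∧
  (∀ v ∈ z', ∀ w ∈ z, Relation.ReflTransGen (q.zAdj z) (Term.var v) (Term.var w) → w ∈ z') ∧
  (∀ v ∈ z', ∀ w ∈ z', Relation.ReflTransGen (q.zAdj z) (Term.var v) (Term.var w))

/-- `φ_{z'}`: the subconjunction of all atoms of `q` mentioning a variable of `z'`. -/
def CQ.subAtoms (q : CQ) (z' : Finset Var) : List QAtom :=
  q.atoms.filter (fun atm => decide (∃ v ∈ z', v ∈ QAtom.vars atm))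

def termsOfList (l : List QAtom) : List Term :=
  l.foldr (fun atm acc => QAtom.terms atm ++ acc) []

/-- `t_{z'}`: all terms occurring in `φ_{z'}` that are not variables of `z`. -/
def CQ.tTerms (q : CQ) (z z' : Finset Var) : List Term :=
  (termsOfList (q.subAtoms z')).filter (fun t => decide (¬ t.IsZVar z))

/-- `atm` is a legitimate choice of `α_{z'}`: an atom of `φ_{z'}` of the form
`P(t,z)` or `P(z,t)` with `z ∈ z'` and the term `t` not a variable of `z`. -/
def IsAlphaFor (q : CQ) (z z' : Finset Var) (atm : QAtom) : Prop :=
  atm ∈ q.subAtoms z' ∧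
  ((∃ P t v, v ∈ z' ∧ ¬ Term.IsZVar t z ∧ atm = QAtom.roleAt P t (Term.var v)) ∨
   (∃ P t v, v ∈ z' ∧ ¬ Term.IsZVar t z ∧ atm = QAtom.roleAt P (Term.var v) t))

def CQ.inds (q : CQ) : List Ind :=
  (termsOfList q.atoms).foldr (fun t acc => t.indsOf ++ acc) []

def CQ.maxInd (q : CQ) : Ind := q.inds.foldr max 0

/-- The individual `a` of `q^a_{z'}`: the individual among `t_{z'}` if one
exists, and a fresh individual otherwise. -/
def freshA (q : CQ) (z z' : Finset Var) : Ind :=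
  if h : ∃ c : Ind, Term.ind c ∈ q.tTerms z z' then h.choose else q.maxInd + 1

/-- A fresh individual `b` (distinct from `freshA`). -/
def freshB (q : CQ) : Ind := q.maxInd + 2

/-- The one-assertion bag ABox `A'` used to test realisability: `{P(a,b)}` if
`α_{z'} = P(t,z)` and `{P(b,a)}` if `α_{z'} = P(z,t)`. -/
def alphaABox (z' : Finset Var) (atm : QAtom) (a b : Ind) : BagABox :=
  match atm with
  | QAtom.roleAt P _ t₂ =>
      if Term.IsZVar t₂ z' then {Assertion.roleA P a b} else {Assertion.roleA P b a}
  | _ => 0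

def subVars (q : CQ) (z' : Finset Var) : List Var :=
  (q.subAtoms z').foldr (fun atm acc => QAtom.vars atm ++ acc) []

/-- The bag answer `(q^a_{z'})^{C(⟨T,A'⟩)}(⟨⟩)` of the Boolean query
`q^a_{z'}() = ∃x'.∃z'. φ_{z'} ∧ ⋀_{t ∈ t_{z'}}(t = a) ∧ ⋀_{z ∈ z'}(z ≠ a)`
over the canonical model of `⟨T,A'⟩`. -/
def realQAnswer (T : TBox) (q : CQ) (z z' : Finset Var) (atm : QAtom) : ℕ∞ :=
  bagSum (fun f : {f : Var → CanElem //
      (∀ v, v ∉ subVars q z' → f v = CanElem.ind 0) ∧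
      (∀ t ∈ q.tTerms z z',
        termVal (canInterp ⟨T, alphaABox z' atm (freshA q z z') (freshB q)⟩) f t
          = CanElem.ind (freshA q z z')) ∧
      ∀ v ∈ z', f v ≠ CanElem.ind (freshA q z z')} =>
    ((q.subAtoms z').map
      (QAtom.mult (canInterp ⟨T, alphaABox z' atm (freshA q z z') (freshB q)⟩) f.1)).prod)

/-- Equality-consistency of `z`: no equality atom `z = t` with `z ∈ z` and `t ∉ z`. -/
def EqConsistent (q : CQ) (z : Finset Var) : Prop :=
  ∀ v t, QAtom.eqAt v t ∈ q.atoms → v ∈ z → Term.IsZVar t z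

/-- The ma-connected subset `z'` is realisable by `T` (w.r.t. the chosen `α_{z'}`). -/
def RealisableMA (T : TBox) (q : CQ) (z z' : Finset Var) (atm : QAtom) : Prop :=
  1 ≤ realQAnswer T q z z' atm

/-- `z` is realisable by `T`: equality-consistent and every nonempty
ma-connected subset of `z` is realisable. -/
def RealisableZ (T : TBox) (q : CQ) (z : Finset Var) (alpha : Finset Var → QAtom) : Prop :=
  EqConsistent q z ∧
  ∀ z' : Finset Var, q.MAConnected z z' → z'.Nonempty → RealisableMA T q z z' (alpha z')

/-- The nonempty ma-connected subsets of `z`. -/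
def maSets (q : CQ) (z : Finset Var) : Finset (Finset Var) :=
  z.powerset.filter (fun z' => q.MAConnected z z' ∧ z'.Nonempty)

def tTermVars (q : CQ) (z z' : Finset Var) : List Var :=
  (q.tTerms z z').foldr (fun t acc => Term.varsOf t ++ acc) []

/-- The equalities identifying all the terms of `t_{z'}`. -/
def eqAtomsFor (q : CQ) (z z' : Finset Var) : List QAtom :=
  (tTermVars q z z').foldr
    (fun v acc => ((q.tTerms z z').map (fun t => QAtom.eqAt v t)) ++ acc) []

/-- Atoms of `q_z`: the atoms of `q` not mentioning a variable of `z`, plus,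
for each nonempty ma-connected `z' ⊆ z`, the atom `α_{z'}` together with the
equalities identifying the terms of `t_{z'}`. -/
def qzAtoms (q : CQ) (z : Finset Var) (alpha : Finset Var → QAtom) : List QAtom :=
  q.atoms.filter (fun atm => decide (¬ ∃ v ∈ z, v ∈ QAtom.vars atm))
    ++ (maSets q z).toList.foldr (fun z' acc => alpha z' :: (eqAtomsFor q z z' ++ acc)) []

/-- The CQ `q_z(x) = ∃y'. φ_z(x,y')`. -/
def qz (q : CQ) (z : Finset Var) (alpha : Finset Var → QAtom) : CQ where
  answerVars := q.answerVars
  existVars := q.existVars.filter (fun v => decide (∃ atm ∈ qzAtoms q z alpha, v ∈ QAtom.vars atm))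
  atoms := qzAtoms q z alpha

/- ## The BALG rewriting `q̄` -/

/-- Value of an atom of `q_z` after the rewriting step 3 (`chasing back'' with
the TBox): concept atoms `A(t)` become `⋁_{T ⊨ C ⊑ A} ζ_C(t)`, role atoms with a
`z`-variable become the corresponding truncated difference, and the remaining
atoms are evaluated as before. -/
def rewAtomVal (T : TBox) (I : BagInterp) (z : Finset Var) (f : Var → I.Δ) : QAtom → ℕ∞
  | QAtom.conceptAt A t => cclI T I (DLConcept.atomic A) (termVal I f t)
  | QAtom.roleAt P t₁ t₂ =>
      if Term.IsZVar t₂ z then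
        cclI T I (DLConcept.ex (Role.atomic P)) (termVal I f t₁)
          - I.conceptMult (DLConcept.ex (Role.atomic P)) (termVal I f t₁)
      else if Term.IsZVar t₁ z then
        cclI T I (DLConcept.ex (Role.inv P)) (termVal I f t₂)
          - I.conceptMult (DLConcept.ex (Role.inv P)) (termVal I f t₂)
      else I.rI P (termVal I f t₁) (termVal I f t₂)
  | QAtom.eqAt v t => if f v = termVal I f t then 1 else 0

/-- Bag answers of the BALG query `q̄_z`, obtained from `q_z` by projecting only
the variables of `y' ∖ z` and replacing atoms as in `rewAtomVal`. -/
def rewAnswer (T : TBox) (qq : CQ) (z : Finset Var) (I : BagInterp) (a : List Ind) : ℕ∞ :=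
  bagSum (fun f : {f : Var → I.Δ //
      (∀ v, v ∉ qq.answerVars ++ qq.existVars.filter (fun u => decide (u ∉ z)) →
        f v = I.indMap 0) ∧
      qq.answerVars.map f = a.map I.indMap} =>
    (qq.atoms.map (rewAtomVal T I z f.1)).prod)

/- ## BALG¹_ε queries -/

def Term.fvars (t : Term) : Finset Var :=
  match t with
  | Term.var v => {v}
  | Term.ind _ => ∅

/-- Syntax of BALG¹_ε queries. -/
inductive BQuery where
  | atomC : AtomicConcept → Term → BQuery
  | atomR : AtomicRole → Term → Term → BQuery
  | conj : BQuery → BQuery → BQuery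
  | eqSel : BQuery → Var → Term → BQuery
  | proj : List Var → BQuery → BQuery
  | maxU : BQuery → BQuery → BQuery
  | arithU : BQuery → BQuery → BQuery
  | diff : BQuery → BQuery → BQuery

/-- Answer variables of a BALG¹_ε query. -/
def BQuery.fv : BQuery → Finset Var
  | BQuery.atomC _ t => t.fvars
  | BQuery.atomR _ t₁ t₂ => t₁.fvars ∪ t₂.fvars
  | BQuery.conj q₁ q₂ => q₁.fv ∪ q₂.fv
  | BQuery.eqSel q _ t => q.fv ∪ t.fvars
  | BQuery.proj ys q => q.fv \ ys.toFinset
  | BQuery.maxU q₁ _ => q₁.fv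
  | BQuery.arithU q₁ _ => q₁.fv
  | BQuery.diff q₁ _ => q₁.fv

/-- Well-formedness of BALG¹_ε queries. -/
def BQuery.WF : BQuery → Prop
  | BQuery.atomC _ _ => True
  | BQuery.atomR _ _ _ => True
  | BQuery.conj q₁ q₂ => q₁.WF ∧ q₂.WF
  | BQuery.eqSel q x _ => q.WF ∧ x ∈ q.fv
  | BQuery.proj _ q => q.WF
  | BQuery.maxU q₁ q₂ => q₁.WF ∧ q₂.WF ∧ q₁.fv = q₂.fv
  | BQuery.arithU q₁ q₂ => q₁.WF ∧ q₂.WF ∧ q₁.fv = q₂.fv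
  | BQuery.diff q₁ q₂ => q₁.WF ∧ q₂.WF ∧ q₁.fv = q₂.fv

/-- Semantics of BALG¹_ε queries under a valuation of the answer variables. -/
def BQuery.val (I : BagInterp) : BQuery → (Var → I.Δ) → ℕ∞
  | BQuery.atomC A t, f => I.cI A (termVal I f t)
  | BQuery.atomR P t₁ t₂, f => I.rI P (termVal I f t₁) (termVal I f t₂)
  | BQuery.conj q₁ q₂, f => q₁.val I f * q₂.val I f
  | BQuery.eqSel q x t, f => if f x = termVal I f t then q.val I f else 0
  | BQuery.proj ys q, f => bagSum (fun g : {g : Var → I.Δ // ∀ v, v ∉ ys → g v = f v} => q.val I g.1)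
  | BQuery.maxU q₁ q₂, f => max (q₁.val I f) (q₂.val I f)
  | BQuery.arithU q₁ q₂, f => q₁.val I f + q₂.val I f
  | BQuery.diff q₁ q₂, f => q₁.val I f - q₂.val I f

/-- Bag answers of a BALG¹_ε query with answer variables `xs` on a tuple `a`. -/
def BQuery.answer (Q : BQuery) (xs : List Var) (I : BagInterp) (a : List Ind) : ℕ∞ :=
  if a.length = xs.length then Q.val I (fun v => I.indMap (a.getD (xs.idxOf v) 0)) else 0

/- ## Enumerated bags, e-homomorphisms, and e-valuations -/

/-- Enumerated copies of a bag of domain elements (for an atomic concept). -/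
def EBagC (I : BagInterp) (A : AtomicConcept) : Type :=
  {p : I.Δ × ℕ // 1 ≤ p.2 ∧ (p.2 : ℕ∞) ≤ I.cI A p.1}

/-- Enumerated copies of a bag of pairs (for an atomic role). -/
def EBagR (I : BagInterp) (P : AtomicRole) : Type :=
  {p : (I.Δ × I.Δ) × ℕ // 1 ≤ p.2 ∧ (p.2 : ℕ∞) ≤ I.rI P p.1.1 p.1.2}

/-- An e-homomorphism between the enumerated versions of two bag interpretations. -/
structure EHom (I J : BagInterp) where
  h : I.Δ → J.Δ
  hInd : ∀ a : Ind, h (I.indMap a) = J.indMap a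
  hC : ∀ A : AtomicConcept, EBagC I A → EBagC J A
  hC_fst : ∀ (A : AtomicConcept) (x : EBagC I A), (hC A x).1.1 = h x.1.1
  hR : ∀ P : AtomicRole, EBagR I P → EBagR J P
  hR_fst : ∀ (P : AtomicRole) (x : EBagR I P), (hR P x).1.1 = (h x.1.1.1, h x.1.1.2)

/-- Predicate-injectivity on individuals of an e-homomorphism. -/
def EHom.PredInj {I J : BagInterp} (e : EHom I J) : Prop :=
  ∀ u : I.Δ, (∃ a : Ind, e.h u = J.indMap a) →
    (∀ A : AtomicConcept, ∀ x y : EBagC I A,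
      x.1.1 = u → y.1.1 = u → x.1.2 ≠ y.1.2 → e.hC A x ≠ e.hC A y) ∧
    (∀ P : AtomicRole, ∀ x y : EBagR I P, x.1.1.1 = u → y.1.1.1 = u →
      (x.1.1.2, x.1.2) ≠ (y.1.1.2, y.1.2) → e.hR P x ≠ e.hR P y) ∧
    (∀ P : AtomicRole, ∀ x y : EBagR I P, x.1.1.2 = u → y.1.1.2 = u →
      (x.1.1.1, x.1.2) ≠ (y.1.1.1, y.1.2) → e.hR P x ≠ e.hR P y)

/-- Enumerated atoms of a CQ (seen as a bag of atoms). -/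
def EAtom (q : CQ) : Type := {p : QAtom × ℕ // 1 ≤ p.2 ∧ p.2 ≤ q.atoms.count p.1}

/-- An e-valuation of the enumerated query `q^e` over the enumerated
interpretation `I^e`. -/
structure EVal (q : CQ) (I : BagInterp) where
  ν : Var → I.Δ
  hjunk : ∀ v, v ∉ q.vars → ν v = I.indMap 0
  heq : ∀ z t, QAtom.eqAt z t ∈ q.atoms → ν z = termVal I ν t
  ℓ : EAtom q → ℕ
  hone : ∀ e : EAtom q, 1 ≤ ℓ e
  hconcept : ∀ (e : EAtom q) (A : AtomicConcept) (t : Term),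
    e.1.1 = QAtom.conceptAt A t → (ℓ e : ℕ∞) ≤ I.cI A (termVal I ν t)
  hrole : ∀ (e : EAtom q) (P : AtomicRole) (t₁ t₂ : Term),
    e.1.1 = QAtom.roleAt P t₁ t₂ → (ℓ e : ℕ∞) ≤ I.rI P (termVal I ν t₁) (termVal I ν t₂)
  heqm : ∀ (e : EAtom q) (z : Var) (t : Term), e.1.1 = QAtom.eqAt z t → ℓ e = 1

/-- The tuple of domain elements to which an e-atom is sent by an e-valuation. -/
def EVal.imgTerms {q : CQ} {I : BagInterp} (ev : EVal q I) (e : EAtom q) : List I.Δ :=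
  (QAtom.terms e.1.1).map (termVal I ev.ν)

/-- The enumerated image of an e-atom under an e-valuation. -/
def EVal.img {q : CQ} {I : BagInterp} (ev : EVal q I) (e : EAtom q) : List I.Δ × ℕ :=
  (ev.imgTerms e, ev.ℓ e)

/- ## Auxiliary concrete queries -/

/-- The CQ `ζ_C(x)`: `A(x)`, `∃y.P(x,y)` or `∃y.P(y,x)`. -/
def zetaCQ : DLConcept → CQ
  | DLConcept.atomic A => ⟨[0], [], [QAtom.conceptAt A (Term.var 0)]⟩
  | DLConcept.ex (Role.atomic P) => ⟨[0], [1], [QAtom.roleAt P (Term.var 0) (Term.var 1)]⟩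
  | DLConcept.ex (Role.inv P) => ⟨[0], [1], [QAtom.roleAt P (Term.var 1) (Term.var 0)]⟩

/-- The CQ `q(x) = R(x,x)`. -/
def selfCQ (P : AtomicRole) : CQ := ⟨[0], [], [QAtom.roleAt P (Term.var 0) (Term.var 0)]⟩

/- ## Auxiliary lemmas for the proof of Statement 8 -/

section Statement8Proof

lemma le_bagSum {α : Type*} (f : α → ℕ∞) (x : α) : f x ≤ bagSum f := by
  refine le_trans ?_ (le_iSup _ ({x} : Finset α)); simp

lemma bagSum_mono {α : Type*} {f g : α → ℕ∞} (h : ∀ x, f x ≤ g x) :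
    bagSum f ≤ bagSum g :=
  iSup_mono fun s => Finset.sum_le_sum fun x _ => h x

lemma exists_one_le_of_one_le_bagSum {α : Type*} {f : α → ℕ∞}
    (h : 1 ≤ bagSum f) : ∃ x, 1 ≤ f x := by
  by_contra hc
  push_neg at hc
  have h0 : ∀ x, f x = 0 := fun x => ENat.lt_one_iff_eq_zero.mp (hc x)
  have hz : bagSum f = 0 :=
    le_antisymm (iSup_le fun s => by simp [h0]) zero_le
  rw [hz] at h
  exact absurd h (by simp)

lemma list_prod_map_mono {β : Type*} (l : List β) (u v : β → ℕ∞)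
    (h : ∀ a ∈ l, u a ≤ v a) : (l.map u).prod ≤ (l.map v).prod := by
  induction l with
  | nil => simp
  | cons a l ih =>
      simp only [List.map_cons, List.prod_cons]
      exact mul_le_mul' (h a (by simp)) (ih fun b hb => h b (by simp [hb]))

/-- The TBox `{A₀ ⊑ ∃P₀}`. -/
def myT : TBox := {TBoxAxiom.cIncl (DLConcept.atomic 0) (DLConcept.ex (Role.atomic 0))}

/-- The query `q(x) = ∃y. P₀(x,y)`. -/
def myq : CQ := ⟨[0], [1], [QAtom.roleAt 0 (Term.var 0) (Term.var 1)]⟩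

def bA1 : BagABox := {Assertion.conceptA 0 0}
def bA2 : BagABox := {Assertion.roleA 0 0 1}
def bA3 : BagABox := Assertion.conceptA 0 0 ::ₘ {Assertion.roleA 0 0 1}

lemma bA1_le : bA1 ≤ bA3 := by
  have h : bA1 = Assertion.conceptA 0 0 ::ₘ 0 := rfl
  rw [h]
  exact Multiset.cons_le_cons _ zero_le

lemma bA2_le : bA2 ≤ bA3 := Multiset.le_cons_self _ _

lemma bA3_count_c (A : AtomicConcept) (a : Ind) :
    bA3.count (Assertion.conceptA A a) = if A = 0 ∧ a = 0 then 1 else 0 := by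
  rw [bA3, Multiset.count_cons, Multiset.count_singleton]
  by_cases hA : A = 0 <;> by_cases ha : a = 0 <;> simp [hA, ha]

lemma bA3_count_r (P : AtomicRole) (a b : Ind) :
    bA3.count (Assertion.roleA P a b) = if P = 0 ∧ a = 0 ∧ b = 1 then 1 else 0 := by
  rw [bA3, Multiset.count_cons, Multiset.count_singleton]
  by_cases hP : P = 0 <;> by_cases ha : a = 0 <;> by_cases hb : b = 1 <;>
    simp [hP, ha, hb]

/-- A concrete bag model of `⟨myT, B⟩` for every `B ≤ bA3`. -/
@[reducible] def myM : BagInterp where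
  Δ := Ind
  dne := ⟨0⟩
  indMap := id
  indInj := fun _ _ h => h
  cI := fun A u => if A = 0 ∧ u = 0 then 1 else 0
  rI := fun P u v => if P = 0 ∧ u = 0 ∧ v = 1 then 1 else 0

lemma myM_model {B : BagABox} (hB : B ≤ bA3) : myM.IsModel ⟨myT, B⟩ := by
  constructor
  · intro ax hax
    have hax' : ax = TBoxAxiom.cIncl (DLConcept.atomic 0) (DLConcept.ex (Role.atomic 0)) := by
      simpa [myT] using hax
    subst hax'
    intro u
    by_cases hu : u = 0
    · subst hu
      have hb : (1:ℕ∞) ≤ BagInterp.conceptMult myM (DLConcept.ex (Role.atomic 0)) 0 := by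
        refine le_trans ?_ (le_bagSum (fun v => BagInterp.roleMult myM (Role.atomic 0) 0 v) 1)
        simp [myM, BagInterp.roleMult]
      refine le_trans ?_ hb
      simp [myM, BagInterp.conceptMult]
    · simp [myM, hu, BagInterp.conceptMult]
  · intro s
    have hcount : (B.count s : ℕ∞) ≤ (bA3.count s : ℕ∞) := by
      exact_mod_cast Multiset.count_le_of_le _ hB
    refine le_trans hcount ?_
    cases s with
    | conceptA A a =>
        rw [bA3_count_c]
        simp only [BagInterp.assertMult, myM]
        split <;> simp_all
    | roleA P a b =>
        rw [bA3_count_r]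
        simp only [BagInterp.assertMult, myM]
        split <;> simp_all

lemma myq_vars : myq.vars = [0, 1] := rfl

/-- Lower bound for the answer of `myq` in any interpretation with a `P`-edge
from `indMap 0`. -/
lemma one_le_myq_answer (I : BagInterp) (w : I.Δ)
    (hw : 1 ≤ I.rI 0 (I.indMap 0) w) : 1 ≤ myq.bagAnswer I [0] := by
  classical
  set f : Var → I.Δ := fun v => if v = 1 then w else I.indMap 0 with hf
  have hmem : (∀ v, v ∉ myq.vars → f v = I.indMap 0) ∧
      myq.answerVars.map f = ([0] : List Ind).map I.indMap := by
    constructor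
    · intro v hv
      rw [myq_vars] at hv
      simp only [List.mem_cons, List.mem_singleton] at hv
      push_neg at hv
      simp [hf, hv.2]
    · simp [myq, hf]
  refine le_trans ?_ (le_bagSum _ (⟨f, hmem⟩ :
    {f : Var → I.Δ // (∀ v, v ∉ myq.vars → f v = I.indMap 0) ∧
      myq.answerVars.map f = ([0] : List Ind).map I.indMap}))
  have hp : (myq.atoms.map (QAtom.mult I f)).prod = I.rI 0 (I.indMap 0) w := by
    simp [myq, QAtom.mult, termVal, hf]
  rw [hp]
  exact hw

/-- The canonical valuation in `myM`. -/
def f0 : Var → Ind := fun v => if v = 1 then 1 else 0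

lemma myq_answer_myM_le : myq.bagAnswer myM [0] ≤ 1 := by
  classical
  unfold CQ.bagAnswer
  apply iSup_le
  intro s
  have hf0 : (∀ v, v ∉ myq.vars → f0 v = myM.indMap 0) ∧
      myq.answerVars.map f0 = ([0] : List Ind).map myM.indMap := by
    constructor
    · intro v hv
      rw [myq_vars] at hv
      simp only [List.mem_cons, List.mem_singleton] at hv
      push_neg at hv
      simp [f0, hv.2, myM]
    · simp [myq, f0, myM]
  set x0 : {f : Var → myM.Δ // (∀ v, v ∉ myq.vars → f v = myM.indMap 0) ∧
      myq.answerVars.map f = ([0] : List Ind).map myM.indMap} := ⟨f0, hf0⟩ with hx0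
  have key : ∀ x : {f : Var → myM.Δ // (∀ v, v ∉ myq.vars → f v = myM.indMap 0) ∧
      myq.answerVars.map f = ([0] : List Ind).map myM.indMap},
      (myq.atoms.map (QAtom.mult myM x.1)).prod ≤ if x = x0 then 1 else 0 := by
    rintro ⟨f, hf1, hf2⟩
    have hfz : f 0 = 0 := by
      simpa [myq, myM] using hf2
    have hprod : (myq.atoms.map (QAtom.mult myM f)).prod = myM.rI 0 (f 0) (f 1) := by
      simp [myq, QAtom.mult, termVal]
    rw [hprod, hfz]
    by_cases h1 : f 1 = 1
    · have hx : (⟨f, hf1, hf2⟩ : {f : Var → myM.Δ //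
          (∀ v, v ∉ myq.vars → f v = myM.indMap 0) ∧
          myq.answerVars.map f = ([0] : List Ind).map myM.indMap}) = x0 := by
        rw [hx0]
        apply Subtype.ext
        show f = f0
        funext v
        by_cases hv1 : v = 1
        · subst hv1
          rw [h1]; simp [f0]
        · have hf0v : f0 v = 0 := by simp [f0, hv1]
          rw [hf0v]
          by_cases hv0 : v = 0
          · subst hv0; exact hfz
          · have hnv : v ∉ myq.vars := by
              rw [myq_vars]
              simp [hv0, hv1]
            exact hf1 v hnv
      rw [if_pos hx]
      simp [myM, h1]
    · rw [if_neg ?hne]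
      · simp [myM, h1]
      case hne =>
        intro hx
        apply h1
        have : f = f0 := congrArg Subtype.val (hx.trans hx0)
        rw [this]; simp [f0]
  calc ∑ x ∈ s, (myq.atoms.map (QAtom.mult myM x.1)).prod
      ≤ ∑ x ∈ s, (if x = x0 then 1 else 0) := Finset.sum_le_sum fun x _ => key x
    _ ≤ 1 := by
        rw [Finset.sum_ite_eq' s x0 (fun _ => (1:ℕ∞))]
        split <;> simp

lemma certain_eq_one {B : BagABox} (hB : B ≤ bA3)
    (hlow : ∀ I : BagInterp, I.IsModel ⟨myT, B⟩ → 1 ≤ myq.bagAnswer I [0]) :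
    bagCertain ⟨myT, B⟩ myq [0] = 1 := by
  refine le_antisymm ?_ (le_iInf fun I => le_iInf fun hI => hlow I hI)
  exact iInf_le_of_le myM (iInf_le_of_le (myM_model hB) myq_answer_myM_le)

lemma lower_bA1 : ∀ I : BagInterp, I.IsModel ⟨myT, bA1⟩ → 1 ≤ myq.bagAnswer I [0] := by
  intro I hI
  have hA : 1 ≤ I.cI 0 (I.indMap 0) := by
    have h := hI.2 (Assertion.conceptA 0 0)
    simpa [BagABox.mult, bA1, BagInterp.assertMult] using h
  have hax := hI.1 (TBoxAxiom.cIncl (DLConcept.atomic 0) (DLConcept.ex (Role.atomic 0)))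
    (by simp [myT])
  have hsum : 1 ≤ bagSum (fun v => I.rI 0 (I.indMap 0) v) := by
    have h := hax (I.indMap 0)
    simp only [BagInterp.conceptMult, BagInterp.roleMult] at h
    exact le_trans hA h
  obtain ⟨w, hw⟩ := exists_one_le_of_one_le_bagSum hsum
  exact one_le_myq_answer I w hw

lemma lower_roleFact {B : BagABox} (hc : 1 ≤ B.count (Assertion.roleA 0 0 1)) :
    ∀ I : BagInterp, I.IsModel ⟨myT, B⟩ → 1 ≤ myq.bagAnswer I [0] := by
  intro I hI
  have h := hI.2 (Assertion.roleA 0 0 1)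
  simp only [BagABox.mult, BagInterp.assertMult] at h
  refine one_le_myq_answer I (I.indMap 1) (le_trans ?_ h)
  exact_mod_cast hc

lemma certain_bA1 : bagCertain ⟨myT, bA1⟩ myq [0] = 1 := certain_eq_one bA1_le lower_bA1
lemma certain_bA2 : bagCertain ⟨myT, bA2⟩ myq [0] = 1 :=
  certain_eq_one bA2_le (lower_roleFact (by simp [bA2]))
lemma certain_bA3 : bagCertain ⟨myT, bA3⟩ myq [0] = 1 :=
  certain_eq_one le_rfl (lower_roleFact (by rw [bA3_count_r]; simp))

lemma satisfiable_of_le {B : BagABox} (hB : B ≤ bA3) : Ontology.Satisfiable ⟨myT, B⟩ :=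
  ⟨myM, myM_model hB⟩

/-- Monotonicity of bag answers over canonical models of growing ABoxes. -/
lemma answer_mono_empty (q : CQ) {B B' : BagABox} (h : B ≤ B') (a : List Ind) :
    q.bagAnswer (emptyCanInterp B) a ≤ q.bagAnswer (emptyCanInterp B') a := by
  unfold CQ.bagAnswer
  refine bagSum_mono fun x => ?_
  refine list_prod_map_mono _ _ _ fun atm _ => ?_
  cases atm with
  | conceptAt A t =>
      simp only [QAtom.mult, emptyCanInterp, BagABox.mult]
      exact_mod_cast Multiset.count_le_of_le _ h
  | roleAt P t₁ t₂ =>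
      simp only [QAtom.mult, emptyCanInterp, BagABox.mult]
      exact_mod_cast Multiset.count_le_of_le _ h
  | eqAt z t => exact le_rfl

/-- A well-formed query with answer variable `0` cannot have positive answers
over both `C(⟨∅,A₁⟩)` and `C(⟨∅,A₂⟩)`. -/
lemma no_double (q' : CQ) (hwf : q'.WellFormed) (hav : q'.answerVars = [0])
    (h1 : 1 ≤ q'.bagAnswer (emptyCanInterp bA1) [0])
    (h2 : 1 ≤ q'.bagAnswer (emptyCanInterp bA2) [0]) : False := by
  obtain ⟨f1, hp1⟩ := exists_one_le_of_one_le_bagSum h1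
  obtain ⟨f2, hp2⟩ := exists_one_le_of_one_le_bagSum h2
  have h0v : (0 : Var) ∈ q'.vars := by
    unfold CQ.vars; rw [hav]; simp
  obtain ⟨t, atm, hatm, hne, -, -⟩ := hwf.2.2.2.2 0 h0v
  cases atm with
  | eqAt z s => exact (hne z s rfl).elim
  | conceptAt A s =>
      have hz : QAtom.mult (emptyCanInterp bA2) f2.1 (QAtom.conceptAt A s) = 0 := by
        simp only [QAtom.mult, emptyCanInterp, BagABox.mult, bA2]
        rw [Multiset.count_singleton]
        simp
      have hpz : (q'.atoms.map (QAtom.mult (emptyCanInterp bA2) f2.1)).prod = 0 :=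
        List.prod_eq_zero (List.mem_map.mpr ⟨_, hatm, hz⟩)
      rw [hpz] at hp2
      exact absurd hp2 (by simp)
  | roleAt P s₁ s₂ =>
      have hz : QAtom.mult (emptyCanInterp bA1) f1.1 (QAtom.roleAt P s₁ s₂) = 0 := by
        simp only [QAtom.mult, emptyCanInterp, BagABox.mult, bA1]
        rw [Multiset.count_singleton]
        simp
      have hpz : (q'.atoms.map (QAtom.mult (emptyCanInterp bA1) f1.1)).prod = 0 :=
        List.prod_eq_zero (List.mem_map.mpr ⟨_, hatm, hz⟩)
      rw [hpz] at hp1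
      exact absurd hp1 (by simp)

lemma exists_one_le_of_sum {qs : List CQ} {g : CQ → ℕ∞}
    (h : 1 ≤ (qs.map g).sum) : ∃ q' ∈ qs, 1 ≤ g q' := by
  by_contra hc
  push_neg at hc
  have hz : (qs.map g).sum = 0 := List.sum_eq_zero (by
    intro x hx
    obtain ⟨q', hq', rfl⟩ := List.mem_map.mp hx
    exact ENat.lt_one_iff_eq_zero.mp (hc q' hq'))
  rw [hz] at h
  exact absurd h (by simp)

lemma myq_wf : myq.WellFormed := by
  refine ⟨by simp [myq], by simp [myq], ?_, ?_, ?_⟩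
  · intro v hv
    have hv0 : v = 0 := by simpa [myq] using hv
    subst hv0
    simp [myq]
  · intro atm hatm v hv
    simp only [myq, List.mem_singleton] at hatm
    subst hatm
    exact hv
  · intro v hv
    refine ⟨Term.var v, QAtom.roleAt 0 (Term.var 0) (Term.var 1), by simp [myq],
      fun z s h => by simp at h, ?_, Relation.EqvGen.refl _⟩
    unfold CQ.vars at hv
    simp only [myq, List.cons_append, List.nil_append,
      List.mem_cons, List.mem_singleton] at hv
    rcases hv with h | h | h
    · subst h; simp [QAtom.terms]
    · subst h; simp [QAtom.terms]
    · exact absurd h (by simp)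

lemma myq_rooted : myq.Rooted := by
  intro t ht
  obtain ⟨atm, hatm, hterm⟩ := ht
  simp only [myq, List.mem_singleton] at hatm
  subst hatm
  simp only [QAtom.terms, List.mem_cons, List.mem_singleton] at hterm
  refine ⟨Term.var 0, ?_, Or.inl ⟨0, by simp [myq], rfl⟩⟩
  rcases hterm with h | h | h
  · subst h; exact Relation.ReflTransGen.refl
  · subst h
    exact Relation.ReflTransGen.single
      ⟨QAtom.roleAt 0 (Term.var 0) (Term.var 1), by simp [myq],
        by simp [QAtom.terms], by simp [QAtom.terms]⟩
  · exact absurd h (by simp)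

end Statement8Proof

/-- Rooted CQs are not rewritable to arithmetic unions of CQs
for DL-Lite_core^bag: there exist a DL-Lite_core TBox `T` and a rooted CQ `q`
such that for every arithmetic union `q₁ ⩒ … ⩒ q_n` of CQs there is a bag ABox
`A` with `⟨T,A⟩` satisfiable such that the bag certain answers of `q` over
`⟨T,A⟩` differ from the pointwise sum of the bag answers of the `q_i` over
`C(⟨∅,A⟩)`. -/

theorem statement_8 :
    ∃ (T : TBox) (q : CQ), TBox.IsCore T ∧ q.WellFormed ∧ q.Rooted ∧
      ∀ qs : List CQ, qs ≠ [] →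
        (∀ q' ∈ qs, q'.WellFormed ∧ q'.answerVars = q.answerVars) →
        ∃ A : BagABox, Ontology.Satisfiable ⟨T, A⟩ ∧
          ∃ a : List Ind,
            bagCertain ⟨T, A⟩ q a
              ≠ (qs.map (fun q' => q'.bagAnswer (emptyCanInterp A) a)).sum := by
  classical
  refine ⟨myT, myq, ?_, myq_wf, myq_rooted, ?_⟩
  · intro ax hax
    have : ax = TBoxAxiom.cIncl (DLConcept.atomic 0) (DLConcept.ex (Role.atomic 0)) := by
      simpa [myT] using hax
    exact Or.inl ⟨_, _, this⟩
  · intro qs hne hwf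
    set g1 : CQ → ℕ∞ := fun q' => q'.bagAnswer (emptyCanInterp bA1) [0] with hg1
    set g2 : CQ → ℕ∞ := fun q' => q'.bagAnswer (emptyCanInterp bA2) [0] with hg2
    set g3 : CQ → ℕ∞ := fun q' => q'.bagAnswer (emptyCanInterp bA3) [0] with hg3
    by_cases h1 : (qs.map g1).sum = 1
    · by_cases h2 : (qs.map g2).sum = 1
      · by_cases h3 : (qs.map g3).sum = 1
        · exfalso
          obtain ⟨qa, hqa, hqa1⟩ := exists_one_le_of_sum (g := g1) (by rw [h1])
          obtain ⟨qb, hqb, hqb1⟩ := exists_one_le_of_sum (g := g2) (by rw [h2])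
          by_cases hab : qa = qb
          · subst hab
            exact no_double qa (hwf qa hqa).1 ((hwf qa hqa).2) hqa1 hqb1
          · have hsum3 : (qs.map g3).sum = g3 qa + ((qs.erase qa).map g3).sum := by
              rw [((List.perm_cons_erase hqa).map g3).sum_eq]; simp
            have hb3 : 1 ≤ ((qs.erase qa).map g3).sum := by
              have hmem : qb ∈ qs.erase qa := List.mem_erase_of_ne (fun h => hab h.symm) |>.mpr hqb
              have : g3 qb ∈ (qs.erase qa).map g3 := List.mem_map.mpr ⟨qb, hmem, rfl⟩
              exact le_trans (le_trans hqb1 (answer_mono_empty qb bA2_le [0]))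
                (List.single_le_sum (fun x _ => zero_le) _ this)
            have ha3 : 1 ≤ g3 qa := le_trans hqa1 (answer_mono_empty qa bA1_le [0])
            have : (2 : ℕ∞) ≤ (qs.map g3).sum := by
              rw [hsum3]
              calc (2:ℕ∞) = 1 + 1 := by norm_num
                _ ≤ g3 qa + ((qs.erase qa).map g3).sum := add_le_add ha3 hb3
            rw [h3] at this
            exact absurd this (by norm_num)
        · exact ⟨bA3, satisfiable_of_le le_rfl, [0], by rw [certain_bA3]; exact fun h => h3 h.symm⟩
      · exact ⟨bA2, satisfiable_of_le bA2_le, [0], by rw [certain_bA2]; exact fun h => h2 h.symm⟩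
    · exact ⟨bA1, satisfiable_of_le bA1_le, [0], by rw [certain_bA1]; exact fun h => h1 h.symm⟩
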